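/- arXiv:2002.11978 — 7 statements merged into one kernel-verified Lean document; each statement's English description precedes it below -/
import Mathlib

section
/- The discretized fractional Laplacian matrix A is strictly diagonally dominant: for every row i, a_{ii} − Σ_{j≠i} |a_{ij}| > 0. In particular, for the first row, a_{11} − Σ_{j≥2} |a_{1j}| > C[(2^ν + κ_μ − 1)/2 + (N^ν − (N−1)^ν)/N^μ + 2ν/(αN^α)] > 0. -/
/-- First-row entries (by offset `k = |i-j|`) of the finite difference discretization
of the 1D integral fractional Laplacian. -/
noncomputable def flEntry (α μ ν κμ C : ℝ) (N : ℕ) : ℕ → ℝ := fun k =>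
  if k = 0 then
    C * ((∑ ℓ ∈ Finset.Icc 2 (N - 1), (((ℓ : ℝ) + 1) ^ ν - ((ℓ : ℝ) - 1) ^ ν) / (ℓ : ℝ) ^ μ)
      + ((N : ℝ) ^ ν - ((N : ℝ) - 1) ^ ν) / (N : ℝ) ^ μ
      + ((2 : ℝ) ^ ν + κμ - 1) + 2 * ν / (α * (N : ℝ) ^ α))
  else if k = 1 then -(C * ((2 : ℝ) ^ ν + κμ - 1) / 2)
  else -(C * (((k : ℝ) + 1) ^ ν - ((k : ℝ) - 1) ^ ν) / (2 * (k : ℝ) ^ μ))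

/-- The `(N-1)×(N-1)` symmetric Toeplitz matrix of the discretized fractional Laplacian. -/
noncomputable def flMatrix (α μ ν κμ C : ℝ) (N : ℕ) :
    Matrix (Fin (N - 1)) (Fin (N - 1)) ℝ :=
  fun i j => flEntry α μ ν κμ C N (((i.val : ℤ) - (j.val : ℤ)).natAbs)

theorem stmt1 (α μ ν κμ C : ℝ) (N : ℕ)
    (hα : 0 < α) (hα2 : α < 2) (hμl : α < μ) (hμu : μ ≤ 2)
    (hν : ν = μ - α) (hκ : κμ = if μ < 2 then 1 else 2)
    (hC : 0 < C) (hN : 2 ≤ N) :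
    let A := flMatrix α μ ν κμ C N
    let i0 : Fin (N - 1) := ⟨0, by omega⟩
    (∀ i : Fin (N - 1),
        0 < A i i - ∑ j ∈ Finset.univ.filter (fun j => j ≠ i), |A i j|) ∧
    C * (((2 : ℝ) ^ ν + κμ - 1) / 2 + ((N : ℝ) ^ ν - ((N : ℝ) - 1) ^ ν) / (N : ℝ) ^ μ
        + 2 * ν / (α * (N : ℝ) ^ α))
      < A i0 i0 - ∑ j ∈ Finset.univ.filter (fun j => j ≠ i0), |A i0 j| ∧
    0 < C * (((2 : ℝ) ^ ν + κμ - 1) / 2 + ((N : ℝ) ^ ν - ((N : ℝ) - 1) ^ ν) / (N : ℝ) ^ μ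
        + 2 * ν / (α * (N : ℝ) ^ α)) := by
  intro A i0
  have hνpos : 0 < ν := by rw [hν]; linarith
  -- basic positivity facts
  have hB : 0 < (2 : ℝ) ^ ν + κμ - 1 := by
    have h2 : (0:ℝ) < (2:ℝ) ^ ν := Real.rpow_pos_of_pos (by norm_num) ν
    have hκ1 : (1:ℝ) ≤ κμ := by rw [hκ]; split <;> norm_num
    linarith
  set G : ℕ → ℝ := fun ℓ => (((ℓ : ℝ) + 1) ^ ν - ((ℓ : ℝ) - 1) ^ ν) / (ℓ : ℝ) ^ μ with hGdef
  have hGpos : ∀ ℓ : ℕ, 2 ≤ ℓ → 0 < G ℓ := by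
    intro ℓ hℓ
    have h1 : (0:ℝ) ≤ (ℓ:ℝ) - 1 := by
      have : (2:ℝ) ≤ (ℓ:ℝ) := by exact_mod_cast hℓ
      linarith
    have h2 : ((ℓ:ℝ) - 1) ^ ν < ((ℓ:ℝ) + 1) ^ ν :=
      Real.rpow_lt_rpow h1 (by linarith) hνpos
    have h3 : (0:ℝ) < (ℓ:ℝ) ^ μ := Real.rpow_pos_of_pos (by positivity) μ
    exact div_pos (by linarith) h3
  have hT : 0 < ((N : ℝ) ^ ν - ((N : ℝ) - 1) ^ ν) / (N : ℝ) ^ μ := by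
    have h1 : (0:ℝ) ≤ (N:ℝ) - 1 := by
      have : (2:ℝ) ≤ (N:ℝ) := by exact_mod_cast hN
      linarith
    have h2 : ((N:ℝ) - 1) ^ ν < (N:ℝ) ^ ν :=
      Real.rpow_lt_rpow h1 (by linarith) hνpos
    have h3 : (0:ℝ) < (N:ℝ) ^ μ := Real.rpow_pos_of_pos (by positivity) μ
    exact div_pos (by linarith) h3
  have hE : 0 < 2 * ν / (α * (N : ℝ) ^ α) := by
    have h3 : (0:ℝ) < (N:ℝ) ^ α := Real.rpow_pos_of_pos (by positivity) α
    positivity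
  set H : ℕ → ℝ := fun k =>
    if k = 1 then C * ((2 : ℝ) ^ ν + κμ - 1) / 2
    else C * (((k : ℝ) + 1) ^ ν - ((k : ℝ) - 1) ^ ν) / (2 * (k : ℝ) ^ μ) with hHdef
  have hH1 : H 1 = C * ((2 : ℝ) ^ ν + κμ - 1) / 2 := by simp [hHdef]
  have hHG : ∀ k : ℕ, 2 ≤ k → H k = C * G k / 2 := by
    intro k hk
    have hk1 : k ≠ 1 := by omega
    have h3 : ((k:ℝ)) ^ μ ≠ 0 := ne_of_gt (Real.rpow_pos_of_pos (by positivity) μ)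
    simp only [hHdef, hGdef, if_neg hk1]
    conv_rhs => rw [mul_div_assoc, div_div, mul_comm ((k:ℝ) ^ μ) 2, ← mul_div_assoc]
  have hHpos : ∀ k : ℕ, 1 ≤ k → 0 < H k := by
    intro k hk
    rcases Nat.lt_or_ge k 2 with h | h
    · have : k = 1 := by omega
      subst this
      rw [hH1]
      positivity
    · rw [hHG k h]
      have := hGpos k h
      positivity
  have habs : ∀ k : ℕ, 1 ≤ k → |flEntry α μ ν κμ C N k| = H k := by
    intro k hk
    have hpos := hHpos k hk
    have hk0 : k ≠ 0 := by omega
    have hfe : flEntry α μ ν κμ C N k = -(H k) := by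
      rcases Nat.lt_or_ge k 2 with h | h
      · have hk1 : k = 1 := by omega
        subst hk1
        simp [flEntry, hHdef]
      · have hk1 : k ≠ 1 := by omega
        simp [flEntry, hHdef, hk0, hk1]
    rw [hfe, abs_neg, abs_of_pos hpos]
  set BB : ℝ := (2 : ℝ) ^ ν + κμ - 1 with hBBdef
  set TT : ℝ := ((N : ℝ) ^ ν - ((N : ℝ) - 1) ^ ν) / (N : ℝ) ^ μ with hTTdef
  set EE : ℝ := 2 * ν / (α * (N : ℝ) ^ α) with hEEdef
  set Sg : ℝ := ∑ ℓ ∈ Finset.Icc 2 (N - 1), G ℓ with hSgdef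
  have hSgnn : 0 ≤ Sg := Finset.sum_nonneg fun ℓ hℓ => (hGpos ℓ (Finset.mem_Icc.mp hℓ).1).le
  have hAdiag : ∀ i : Fin (N - 1), A i i = C * (Sg + TT + BB + EE) := by
    intro i
    have h0 : ((((i : ℕ) : ℤ)) - (((i : ℕ) : ℤ))).natAbs = 0 := by omega
    show flEntry α μ ν κμ C N ((((i : ℕ) : ℤ)) - (((i : ℕ) : ℤ))).natAbs = _
    rw [h0]
    simp [flEntry, hSgdef, hTTdef, hBBdef, hEEdef, hGdef]
  have habsA : ∀ i j : Fin (N - 1), j ≠ i →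
      |A i j| = H ((((i : ℕ) : ℤ) - ((j : ℕ) : ℤ)).natAbs) := by
    intro i j hne
    have hvne : (j : ℕ) ≠ (i : ℕ) := fun h => hne (Fin.ext h)
    exact habs _ (by omega)
  have key : ∀ i : Fin (N - 1),
      ∑ j ∈ Finset.univ.filter (fun j => j ≠ i), |A i j|
        ≤ ∑ k ∈ Finset.Icc 1 (N - 2), 2 * H k := by
    intro i
    have hmap : ∀ j ∈ Finset.univ.filter (fun j => j ≠ i),
        ((((i : ℕ) : ℤ) - ((j : ℕ) : ℤ)).natAbs) ∈ Finset.Icc 1 (N - 2) := by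
      intro j hj
      simp only [Finset.mem_filter, Finset.mem_univ, true_and] at hj
      have h1 : (j : ℕ) ≠ (i : ℕ) := fun h => hj (Fin.ext h)
      have h2 := j.isLt
      have h3 := i.isLt
      simp only [Finset.mem_Icc]
      omega
    rw [← Finset.sum_fiberwise_of_maps_to hmap (fun j => |A i j|)]
    apply Finset.sum_le_sum
    intro k hk
    have hk1 : 1 ≤ k := (Finset.mem_Icc.mp hk).1
    have hHk := hHpos k hk1
    set s := Finset.filter (fun j : Fin (N - 1) => ((((i : ℕ) : ℤ) - ((j : ℕ) : ℤ)).natAbs) = k)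
      (Finset.univ.filter (fun j => j ≠ i)) with hsdef
    have hcard : s.card ≤ 2 := by
      have hsub : ∀ j ∈ s, (j : ℕ) ∈ ({(i : ℕ) + k, (i : ℕ) - k} : Finset ℕ) := by
        intro j hj
        simp only [hsdef, Finset.mem_filter, Finset.mem_univ, true_and] at hj
        simp only [Finset.mem_insert, Finset.mem_singleton]
        omega
      have := Finset.card_le_card_of_injOn (fun j : Fin (N - 1) => (j : ℕ)) hsub
        (fun a _ b _ h => Fin.val_injective h)
      have h2 : ({(i : ℕ) + k, (i : ℕ) - k} : Finset ℕ).card ≤ 2 :=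
        (Finset.card_insert_le _ _).trans (by simp)
      omega
    have heq : ∑ j ∈ s, |A i j| = (s.card : ℝ) * H k := by
      rw [Finset.sum_congr rfl (fun j hj => ?_), Finset.sum_const, nsmul_eq_mul]
      simp only [hsdef, Finset.mem_filter, Finset.mem_univ, true_and] at hj
      rw [habsA i j hj.1, hj.2]
    rw [heq]
    have : ((s.card : ℕ) : ℝ) ≤ 2 := by exact_mod_cast hcard
    exact mul_le_mul_of_nonneg_right this hHk.le
  have hsum2 : ∑ k ∈ Finset.Icc 1 (N - 2), 2 * H k ≤ C * BB + C * Sg := by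
    rcases Nat.lt_or_ge N 3 with h | h
    · have he : Finset.Icc 1 (N - 2) = ∅ := by
        rw [Finset.Icc_eq_empty_iff]; omega
      rw [he, Finset.sum_empty]
      have := mul_pos hC hB
      nlinarith [mul_nonneg hC.le hSgnn]
    · have hins : Finset.Icc 1 (N - 2) = insert 1 (Finset.Icc 2 (N - 2)) := by
        ext x
        simp only [Finset.mem_Icc, Finset.mem_insert]
        omega
      rw [hins, Finset.sum_insert (by simp)]
      have h2H1 : 2 * H 1 = C * BB := by rw [hH1]; ring
      have hrest : ∑ k ∈ Finset.Icc 2 (N - 2), 2 * H k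
          = ∑ k ∈ Finset.Icc 2 (N - 2), C * G k := by
        refine Finset.sum_congr rfl fun k hk => ?_
        rw [hHG k (Finset.mem_Icc.mp hk).1]; ring
      have hsub : ∑ k ∈ Finset.Icc 2 (N - 2), C * G k
          ≤ ∑ k ∈ Finset.Icc 2 (N - 1), C * G k := by
        apply Finset.sum_le_sum_of_subset_of_nonneg
        · intro x hx
          simp only [Finset.mem_Icc] at *
          omega
        · exact fun ℓ hℓ _ => (mul_pos hC (hGpos ℓ (Finset.mem_Icc.mp hℓ).1)).le
      have hms : ∑ k ∈ Finset.Icc 2 (N - 1), C * G k = C * Sg := by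
        rw [hSgdef, Finset.mul_sum]
      rw [h2H1, hrest]
      linarith
  have hCT := mul_pos hC hT
  have hCE := mul_pos hC hE
  have hCB := mul_pos hC hB
  refine ⟨?_, ?_, ?_⟩
  · intro i
    have hk := key i
    rw [hAdiag i]
    have hexp : C * (Sg + TT + BB + EE) = C * Sg + C * TT + C * BB + C * EE := by ring
    linarith
  · -- first row: exact value of the off-diagonal sum
    have hval : ∀ j : Fin (N - 1), j ≠ i0 → |A i0 j| = H (j : ℕ) := by
      intro j hj
      rw [habsA i0 j hj]
      congr 1
      have h3 : (i0 : Fin (N - 1)).val = 0 := rfl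
      omega
    have hrow0 : ∑ j ∈ Finset.univ.filter (fun j => j ≠ i0), |A i0 j|
        = ∑ k ∈ Finset.Icc 1 (N - 2), H k := by
      calc ∑ j ∈ Finset.univ.filter (fun j => j ≠ i0), |A i0 j|
          = ∑ j ∈ Finset.univ.filter (fun j => j ≠ i0), H (j : ℕ) :=
            Finset.sum_congr rfl fun j hj => hval j (by simpa using hj)
        _ = ∑ j : Fin (N - 1), (fun k => if k ≠ 0 then H k else 0) (j : ℕ) := by
            rw [Finset.sum_filter]
            refine Finset.sum_congr rfl fun j _ => ?_
            by_cases h : j = i0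
            · subst h
              simp [show (i0 : ℕ) = 0 from rfl]
            · have hne : (j : ℕ) ≠ 0 := fun hh => h (Fin.ext hh)
              simp [h, hne]
        _ = ∑ k ∈ Finset.range (N - 1), (if k ≠ 0 then H k else 0) := by
            exact Fin.sum_univ_eq_sum_range (fun k => if k ≠ 0 then H k else 0) (N - 1)
        _ = ∑ k ∈ (Finset.range (N - 1)).filter (fun k => k ≠ 0), H k :=
            (Finset.sum_filter _ _).symm
        _ = ∑ k ∈ Finset.Icc 1 (N - 2), H k := by
            refine Finset.sum_congr ?_ fun _ _ => rfl
            ext x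
            simp only [Finset.mem_filter, Finset.mem_range, Finset.mem_Icc]
            omega
    rw [hAdiag i0, hrow0]
    rcases Nat.lt_or_ge N 3 with h | h
    · have he : Finset.Icc 1 (N - 2) = ∅ := by rw [Finset.Icc_eq_empty_iff]; omega
      have hS0 : Sg = 0 := by
        rw [hSgdef]
        have : Finset.Icc 2 (N - 1) = ∅ := by rw [Finset.Icc_eq_empty_iff]; omega
        rw [this, Finset.sum_empty]
      rw [he, Finset.sum_empty, hS0]
      nlinarith
    · have hins : Finset.Icc 1 (N - 2) = insert 1 (Finset.Icc 2 (N - 2)) := by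
        ext x
        simp only [Finset.mem_Icc, Finset.mem_insert]
        omega
      rw [hins, Finset.sum_insert (by simp), hH1]
      have hrest : ∑ k ∈ Finset.Icc 2 (N - 2), H k
          = ∑ k ∈ Finset.Icc 2 (N - 2), C * G k / 2 := by
        exact Finset.sum_congr rfl fun k hk => hHG k (Finset.mem_Icc.mp hk).1
      have hsub : ∑ k ∈ Finset.Icc 2 (N - 2), C * G k / 2
          ≤ ∑ k ∈ Finset.Icc 2 (N - 1), C * G k / 2 := by
        apply Finset.sum_le_sum_of_subset_of_nonneg
        · intro x hx
          simp only [Finset.mem_Icc] at *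
          omega
        · intro ℓ hℓ _
          have := hGpos ℓ (Finset.mem_Icc.mp hℓ).1
          positivity
      have hms : ∑ k ∈ Finset.Icc 2 (N - 1), C * G k / 2 = C * Sg / 2 := by
        rw [hSgdef, Finset.mul_sum, Finset.sum_div]
      have hSgpos : 0 < Sg := by
        have hmem : 2 ∈ Finset.Icc 2 (N - 1) := by
          simp only [Finset.mem_Icc]; omega
        have := Finset.single_le_sum
          (fun ℓ hℓ => (hGpos ℓ (Finset.mem_Icc.mp hℓ).1).le) hmem
        have h2 := hGpos 2 le_rfl
        rw [hSgdef]
        linarith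
      have hCS := mul_pos hC hSgpos
      rw [hrest]
      nlinarith
  · have hpos : 0 < BB / 2 + TT + EE := by positivity
    exact mul_pos hC hpos
end

section
/- The absolute values of the first-row entries of the discretized fractional Laplacian matrix A decay monotonically away from the diagonal: a_{11} > |a_{12}| > |a_{13}| > ⋯ > |a_{1,N−1}|, and moreover |a_{1,N−1}| → 0 as N → ∞. -/
open Real Filter

lemma flaux_phi_lt {ν : ℝ} (hν : 0 < ν) {s t : ℝ} (hs : 0 ≤ s) (hst : s < t) (ht : t ≤ 1) :
    (1 + s) ^ ν - (1 - s) ^ ν < (1 + t) ^ ν - (1 - t) ^ ν := by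
  have h1 : (1 + s) ^ ν < (1 + t) ^ ν :=
    Real.rpow_lt_rpow (by linarith) (by linarith) hν
  have h2 : (1 - t) ^ ν ≤ (1 - s) ^ ν :=
    Real.rpow_le_rpow (by linarith) (by linarith) hν.le
  linarith

lemma flaux_phi_pos {ν : ℝ} (hν : 0 < ν) {t : ℝ} (ht0 : 0 < t) (ht1 : t ≤ 1) :
    0 < (1 + t) ^ ν - (1 - t) ^ ν :=
  sub_pos.mpr (Real.rpow_lt_rpow (by linarith) (by linarith) hν)

lemma flaux_F_eq (ν μ : ℝ) {x : ℝ} (hx : 1 ≤ x) :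
    ((x + 1) ^ ν - (x - 1) ^ ν) / x ^ μ
      = x ^ (ν - μ) * ((1 + 1 / x) ^ ν - (1 - 1 / x) ^ ν) := by
  have hx0 : 0 < x := lt_of_lt_of_le one_pos hx
  have h1x : 1 / x ≤ 1 := by rw [div_le_one hx0]; exact hx
  have h1 : x + 1 = x * (1 + 1 / x) := by field_simp
  have h2 : x - 1 = x * (1 - 1 / x) := by field_simp
  rw [h1, h2, Real.mul_rpow hx0.le (by positivity),
    Real.mul_rpow hx0.le (by linarith), Real.rpow_sub hx0]
  field_simp

lemma flaux_F_anti {ν μ : ℝ} (hν : 0 < ν) (hνμ : ν < μ) {x y : ℝ} (hx : 1 ≤ x) (hxy : x < y) :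
    ((y + 1) ^ ν - (y - 1) ^ ν) / y ^ μ < ((x + 1) ^ ν - (x - 1) ^ ν) / x ^ μ := by
  have hy : 1 ≤ y := hx.trans hxy.le
  have hx0 : 0 < x := lt_of_lt_of_le one_pos hx
  have hy0 : 0 < y := lt_of_lt_of_le one_pos hy
  rw [flaux_F_eq ν μ hx, flaux_F_eq ν μ hy]
  have ha : y ^ (ν - μ) < x ^ (ν - μ) :=
    Real.rpow_lt_rpow_of_neg hx0 hxy (by linarith)
  have h1y : 1 / y ≤ 1 := by rw [div_le_one hy0]; exact hy
  have h1x : 1 / x ≤ 1 := by rw [div_le_one hx0]; exact hx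
  have hinv : 1 / y < 1 / x := one_div_lt_one_div_of_lt hx0 hxy
  have hb : (1 + 1 / y) ^ ν - (1 - 1 / y) ^ ν ≤ (1 + 1 / x) ^ ν - (1 - 1 / x) ^ ν :=
    (flaux_phi_lt hν (by positivity) hinv h1x).le
  have hbpos : 0 < (1 + 1 / y) ^ ν - (1 - 1 / y) ^ ν :=
    flaux_phi_pos hν (by positivity) h1y
  calc y ^ (ν - μ) * ((1 + 1 / y) ^ ν - (1 - 1 / y) ^ ν)
      < x ^ (ν - μ) * ((1 + 1 / y) ^ ν - (1 - 1 / y) ^ ν) :=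
        mul_lt_mul_of_pos_right ha hbpos
    _ ≤ x ^ (ν - μ) * ((1 + 1 / x) ^ ν - (1 - 1 / x) ^ ν) :=
        mul_le_mul_of_nonneg_left hb (Real.rpow_nonneg hx0.le _)

lemma flaux_F_le {ν μ : ℝ} (hν : 0 < ν) {x : ℝ} (hx : 1 ≤ x) :
    ((x + 1) ^ ν - (x - 1) ^ ν) / x ^ μ ≤ x ^ (ν - μ) * 2 ^ ν := by
  have hx0 : 0 < x := lt_of_lt_of_le one_pos hx
  have h1x : 1 / x ≤ 1 := by rw [div_le_one hx0]; exact hx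
  rw [flaux_F_eq ν μ hx]
  apply mul_le_mul_of_nonneg_left _ (Real.rpow_nonneg hx0.le _)
  have h1 : (1 + 1 / x) ^ ν ≤ 2 ^ ν := Real.rpow_le_rpow (by positivity) (by linarith) hν.le
  have h2 : 0 ≤ (1 - 1 / x) ^ ν := Real.rpow_nonneg (by linarith) _
  linarith

theorem stmt3 (α μ ν κμ C : ℝ) (N : ℕ)
    (hα : 0 < α) (hα2 : α < 2) (hμl : α < μ) (hμu : μ ≤ 2)
    (hν : ν = μ - α) (hκ : κμ = if μ < 2 then 1 else 2)
    (hC : 0 < C) (hN : 3 ≤ N) :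
    let g := flEntry α μ ν κμ C N
    -- a₁₁ > |a₁₂|
    |g 1| < g 0 ∧
    -- |a₁₂| > |a₁₃| > ⋯ > |a_{1,N-1}|  (column j ↔ offset j-1)
    (∀ k : ℕ, 1 ≤ k → k ≤ N - 3 → |g (k + 1)| < |g k|) ∧
    -- |a_{1,N-1}| → 0 as N → ∞
    Filter.Tendsto (fun N' : ℕ => |flEntry α μ ν κμ C N' (N' - 2)|)
      Filter.atTop (nhds 0) := by
  intro g
  have hν0 : 0 < ν := by rw [hν]; linarith
  have hνμ : ν < μ := by rw [hν]; linarith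
  have hκ1 : (1 : ℝ) ≤ κμ := by rw [hκ]; split <;> norm_num
  have h2ν1 : (1 : ℝ) ≤ (2 : ℝ) ^ ν := by
    have := Real.rpow_le_rpow_of_exponent_le one_le_two hν0.le
    simpa [Real.rpow_zero] using this
  have hB : (0 : ℝ) < (2 : ℝ) ^ ν + κμ - 1 := by linarith
  have hg1 : g 1 = -(C * ((2 : ℝ) ^ ν + κμ - 1) / 2) := by simp [g, flEntry]
  refine ⟨?_, ?_, ?_⟩
  · -- part 1
    have hNR : (3 : ℝ) ≤ (N : ℝ) := by exact_mod_cast hN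
    have hS : 0 ≤ ∑ ℓ ∈ Finset.Icc 2 (N - 1),
        (((ℓ : ℝ) + 1) ^ ν - ((ℓ : ℝ) - 1) ^ ν) / (ℓ : ℝ) ^ μ := by
      apply Finset.sum_nonneg
      intro ℓ hℓ
      have h2 : 2 ≤ ℓ := (Finset.mem_Icc.mp hℓ).1
      have h2R : (2 : ℝ) ≤ (ℓ : ℝ) := by exact_mod_cast h2
      apply div_nonneg _ (Real.rpow_nonneg (by linarith) _)
      exact sub_nonneg.mpr (Real.rpow_le_rpow (by linarith) (by linarith) hν0.le)
    have hT : 0 ≤ ((N : ℝ) ^ ν - ((N : ℝ) - 1) ^ ν) / (N : ℝ) ^ μ := by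
      apply div_nonneg _ (Real.rpow_nonneg (by linarith) _)
      exact sub_nonneg.mpr (Real.rpow_le_rpow (by linarith) (by linarith) hν0.le)
    have hE : 0 < 2 * ν / (α * (N : ℝ) ^ α) :=
      div_pos (by linarith) (mul_pos hα (Real.rpow_pos_of_pos (by linarith) α))
    have hg0 : g 0 = C * ((∑ ℓ ∈ Finset.Icc 2 (N - 1),
        (((ℓ : ℝ) + 1) ^ ν - ((ℓ : ℝ) - 1) ^ ν) / (ℓ : ℝ) ^ μ)
      + ((N : ℝ) ^ ν - ((N : ℝ) - 1) ^ ν) / (N : ℝ) ^ μ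
      + ((2 : ℝ) ^ ν + κμ - 1) + 2 * ν / (α * (N : ℝ) ^ α)) := by simp [g, flEntry]
    rw [hg0, hg1, abs_neg, abs_of_nonneg
      (div_nonneg (mul_nonneg hC.le hB.le) (by norm_num))]
    have hlt : ((2 : ℝ) ^ ν + κμ - 1) / 2
        < (∑ ℓ ∈ Finset.Icc 2 (N - 1),
            (((ℓ : ℝ) + 1) ^ ν - ((ℓ : ℝ) - 1) ^ ν) / (ℓ : ℝ) ^ μ)
          + ((N : ℝ) ^ ν - ((N : ℝ) - 1) ^ ν) / (N : ℝ) ^ μ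
          + ((2 : ℝ) ^ ν + κμ - 1) + 2 * ν / (α * (N : ℝ) ^ α) := by linarith
    calc C * ((2 : ℝ) ^ ν + κμ - 1) / 2 = C * (((2 : ℝ) ^ ν + κμ - 1) / 2) := by ring
      _ < _ := mul_lt_mul_of_pos_left hlt hC
  · -- part 2
    intro k hk1 hk3
    rcases eq_or_lt_of_le hk1 with h | h
    · -- k = 1
      subst h
      have hg2 : g 2 = -(C * ((3 : ℝ) ^ ν - 1) / (2 * (2 : ℝ) ^ μ)) := by
        simp only [g, flEntry]
        norm_num [Real.one_rpow]
      have h31 : (1 : ℝ) ≤ (3 : ℝ) ^ ν := by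
        have := Real.rpow_le_rpow (by norm_num : (0:ℝ) ≤ 1) (by norm_num : (1:ℝ) ≤ 3) hν0.le
        simpa [Real.one_rpow] using this
      have h2μ : (0 : ℝ) < (2 : ℝ) ^ μ := Real.rpow_pos_of_pos (by norm_num) μ
      rw [hg2, hg1, abs_neg, abs_neg,
        abs_of_nonneg (div_nonneg (mul_nonneg hC.le (by linarith)) (by positivity)),
        abs_of_nonneg (div_nonneg (mul_nonneg hC.le hB.le) (by norm_num))]
      -- (3^ν - 1) < 2^μ * (2^ν + κμ - 1)
      have h4 : (3 : ℝ) ^ ν < (4 : ℝ) ^ ν :=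
        Real.rpow_lt_rpow (by norm_num) (by norm_num) hν0
      have h5 : (4 : ℝ) ^ ν = (2 : ℝ) ^ (2 * ν) := by
        rw [show (4 : ℝ) = (2 : ℝ) ^ (2 : ℝ) by
          rw [show (2:ℝ) = ((2:ℕ):ℝ) by norm_num, Real.rpow_natCast]; norm_num,
          ← Real.rpow_mul (by norm_num)]
      have h6 : (2 : ℝ) ^ (2 * ν) ≤ (2 : ℝ) ^ (μ + ν) :=
        Real.rpow_le_rpow_of_exponent_le one_le_two (by linarith)
      have h7 : (2 : ℝ) ^ (μ + ν) = (2 : ℝ) ^ μ * (2 : ℝ) ^ ν := by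
        rw [Real.rpow_add (by norm_num)]
      have h8 : (2 : ℝ) ^ μ * (2 : ℝ) ^ ν ≤ (2 : ℝ) ^ μ * ((2 : ℝ) ^ ν + κμ - 1) := by
        apply mul_le_mul_of_nonneg_left (by linarith) h2μ.le
      have hkey : (3 : ℝ) ^ ν - 1 < (2 : ℝ) ^ μ * ((2 : ℝ) ^ ν + κμ - 1) := by
        linarith
      rw [div_lt_div_iff₀ (by positivity) (by norm_num)]
      nlinarith [mul_pos hC h2μ]
    · -- 2 ≤ k
      have h2k : 2 ≤ k := h
      have h2kR : (2 : ℝ) ≤ (k : ℝ) := by exact_mod_cast h2k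
      have e1 : g k = -(C * (((k : ℝ) + 1) ^ ν - ((k : ℝ) - 1) ^ ν) / (2 * (k : ℝ) ^ μ)) := by
        simp only [g, flEntry]
        rw [if_neg (by omega), if_neg (by omega)]
      have e2 : g (k + 1)
          = -(C * ((((k : ℝ) + 1) + 1) ^ ν - (((k : ℝ) + 1) - 1) ^ ν)
              / (2 * ((k : ℝ) + 1) ^ μ)) := by
        simp only [g, flEntry]
        rw [if_neg (by omega), if_neg (by omega)]
        push_cast
        ring_nf
      have hnum1 : 0 ≤ ((k : ℝ) + 1) ^ ν - ((k : ℝ) - 1) ^ ν :=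
        sub_nonneg.mpr (Real.rpow_le_rpow (by linarith) (by linarith) hν0.le)
      have hnum2 : 0 ≤ (((k : ℝ) + 1) + 1) ^ ν - (((k : ℝ) + 1) - 1) ^ ν :=
        sub_nonneg.mpr (Real.rpow_le_rpow (by linarith) (by linarith) hν0.le)
      have hkμ : (0 : ℝ) < (k : ℝ) ^ μ := Real.rpow_pos_of_pos (by linarith) μ
      have hk1μ : (0 : ℝ) < ((k : ℝ) + 1) ^ μ := Real.rpow_pos_of_pos (by linarith) μ
      rw [e1, e2, abs_neg, abs_neg,
        abs_of_nonneg (div_nonneg (mul_nonneg hC.le hnum2) (by positivity)),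
        abs_of_nonneg (div_nonneg (mul_nonneg hC.le hnum1) (by positivity))]
      have key := flaux_F_anti hν0 hνμ (show (1 : ℝ) ≤ (k : ℝ) by linarith)
        (lt_add_one (k : ℝ))
      calc C * ((((k : ℝ) + 1) + 1) ^ ν - (((k : ℝ) + 1) - 1) ^ ν) / (2 * ((k : ℝ) + 1) ^ μ)
          = (C / 2) * (((((k : ℝ) + 1) + 1) ^ ν - (((k : ℝ) + 1) - 1) ^ ν)
              / ((k : ℝ) + 1) ^ μ) := by ring
        _ < (C / 2) * ((((k : ℝ) + 1) ^ ν - ((k : ℝ) - 1) ^ ν) / (k : ℝ) ^ μ) :=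
            mul_lt_mul_of_pos_left key (half_pos hC)
        _ = C * (((k : ℝ) + 1) ^ ν - ((k : ℝ) - 1) ^ ν) / (2 * (k : ℝ) ^ μ) := by ring
  · -- part 3
    have hνμα : ν - μ = -α := by rw [hν]; ring
    have htend : Filter.Tendsto (fun N' : ℕ => (C / 2 * 2 ^ ν) * ((N' : ℝ) - 2) ^ (-α))
        Filter.atTop (nhds 0) := by
      have h1 : Filter.Tendsto (fun N' : ℕ => (N' : ℝ) - 2) Filter.atTop Filter.atTop := by
        have := tendsto_atTop_add_const_right Filter.atTop (-2 : ℝ)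
          tendsto_natCast_atTop_atTop (α := ℕ)
        simpa [sub_eq_add_neg] using this
      have h2 := (tendsto_rpow_neg_atTop hα).comp h1
      have := h2.const_mul (C / 2 * 2 ^ ν)
      simpa [Function.comp] using this
    apply squeeze_zero' (Filter.Eventually.of_forall fun _ => abs_nonneg _) _ htend
    filter_upwards [Filter.eventually_ge_atTop 4] with n hn
    have hcast : ((n - 2 : ℕ) : ℝ) = (n : ℝ) - 2 := by
      rw [Nat.cast_sub (by omega)]; norm_num
    have hx : (1 : ℝ) ≤ (n : ℝ) - 2 := by
      have : (4 : ℝ) ≤ (n : ℝ) := by exact_mod_cast hn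
      linarith
    have he : flEntry α μ ν κμ C n (n - 2)
        = -(C * ((((n : ℝ) - 2) + 1) ^ ν - (((n : ℝ) - 2) - 1) ^ ν)
            / (2 * ((n : ℝ) - 2) ^ μ)) := by
      simp only [flEntry]
      rw [if_neg (by omega), if_neg (by omega), hcast]
    have hnum : 0 ≤ (((n : ℝ) - 2) + 1) ^ ν - (((n : ℝ) - 2) - 1) ^ ν :=
      sub_nonneg.mpr (Real.rpow_le_rpow (by linarith) (by linarith) hν0.le)
    have hxμ : (0 : ℝ) < ((n : ℝ) - 2) ^ μ := Real.rpow_pos_of_pos (by linarith) μ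
    rw [he, abs_neg, abs_of_nonneg (div_nonneg (mul_nonneg hC.le hnum) (by positivity))]
    have hle := flaux_F_le (μ := μ) hν0 hx
    rw [hνμα] at hle
    calc C * ((((n : ℝ) - 2) + 1) ^ ν - (((n : ℝ) - 2) - 1) ^ ν)
          / (2 * ((n : ℝ) - 2) ^ μ)
        = (C / 2) * (((((n : ℝ) - 2) + 1) ^ ν - (((n : ℝ) - 2) - 1) ^ ν)
            / ((n : ℝ) - 2) ^ μ) := by ring
      _ ≤ (C / 2) * (((n : ℝ) - 2) ^ (-α) * 2 ^ ν) :=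
          mul_le_mul_of_nonneg_left hle (by positivity)
      _ = (C / 2 * 2 ^ ν) * ((n : ℝ) - 2) ^ (-α) := by ring
end

section
/- For ν ∈ (0,2), α > 0, and μ = ν + α, the function f(k) = ((k+1)^ν − (k−1)^ν)/(2k^μ) is strictly decreasing for real k ≥ 2 and satisfies f(k) = O(k^{−1−α}) as k → ∞. -/
open Real Set Filter

private lemma aux_hasDerivAt (ν μ : ℝ) {x : ℝ} (hx : 2 ≤ x) :
    HasDerivAt (fun k : ℝ => ((k + 1) ^ ν - (k - 1) ^ ν) / (2 * k ^ μ))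
      (((1 * ν * (x + 1) ^ (ν - 1) - 1 * ν * (x - 1) ^ (ν - 1)) * (2 * x ^ μ)
          - ((x + 1) ^ ν - (x - 1) ^ ν) * (2 * (μ * x ^ (μ - 1))))
        / (2 * x ^ μ) ^ 2) x := by
  have hx0 : (0:ℝ) < x := by linarith
  have h1 : HasDerivAt (fun k : ℝ => (k + 1) ^ ν) (1 * ν * (x + 1) ^ (ν - 1)) x :=
    ((hasDerivAt_id x).add_const 1).rpow_const (Or.inl (by simp; linarith))
  have h2 : HasDerivAt (fun k : ℝ => (k - 1) ^ ν) (1 * ν * (x - 1) ^ (ν - 1)) x :=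
    ((hasDerivAt_id x).sub_const 1).rpow_const (Or.inl (by simp; intro h; linarith))
  have h3 : HasDerivAt (fun k : ℝ => 2 * k ^ μ) (2 * (μ * x ^ (μ - 1))) x :=
    (Real.hasDerivAt_rpow_const (Or.inl hx0.ne')).const_mul 2
  exact (h1.sub h2).div h3 (by positivity)

theorem stmt4 (ν α μ : ℝ) (hν0 : 0 < ν) (hν2 : ν < 2)
    (hα0 : 0 < α) (hα2 : α < 2) (hμ : μ = ν + α) :
    StrictAntiOn (fun k : ℝ => ((k + 1) ^ ν - (k - 1) ^ ν) / (2 * k ^ μ)) (Set.Ici 2) ∧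
    Asymptotics.IsBigO Filter.atTop
      (fun k : ℝ => ((k + 1) ^ ν - (k - 1) ^ ν) / (2 * k ^ μ))
      (fun k : ℝ => k ^ (-1 - α)) := by
  have hμν : ν < μ := by rw [hμ]; linarith
  constructor
  · apply strictAntiOn_of_deriv_neg (convex_Ici 2)
    · intro x hx
      exact (aux_hasDerivAt ν μ hx).continuousAt.continuousWithinAt
    · intro x hx
      rw [interior_Ici] at hx
      have hx2 : (2:ℝ) < x := hx
      have hx0 : (0:ℝ) < x := by linarith
      rw [(aux_hasDerivAt ν μ hx2.le).deriv]
      set A1 := (x + 1) ^ (ν - 1) with hA1def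
      set B1 := (x - 1) ^ (ν - 1) with hB1def
      set A := (x + 1) ^ ν with hAdef
      set B := (x - 1) ^ ν with hBdef
      set Q := x ^ (μ - 1) with hQdef
      have hA1 : 0 < A1 := rpow_pos_of_pos (by linarith) _
      have hB1 : 0 < B1 := rpow_pos_of_pos (by linarith) _
      have hQ : 0 < Q := rpow_pos_of_pos hx0 _
      have hAB : B < A := rpow_lt_rpow (by linarith) (by linarith) hν0
      have hA : A = A1 * (x + 1) := by
        rw [hAdef, hA1def, ← Real.rpow_add_one (by positivity : (x:ℝ)+1 ≠ 0)]
        ring_nf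
      have hB : B = B1 * (x - 1) := by
        rw [hBdef, hB1def, ← Real.rpow_add_one (by intro h; nlinarith : (x:ℝ)-1 ≠ 0)]
        ring_nf
      have hP : x ^ μ = Q * x := by
        rw [hQdef, ← Real.rpow_add_one hx0.ne']
        ring_nf
      apply div_neg_of_neg_of_pos
      · rw [hP]
        nlinarith [mul_pos hQ (mul_pos (sub_pos.mpr hμν) (sub_pos.mpr hAB)),
          mul_pos hQ hA1, mul_pos hQ hB1, mul_pos (mul_pos hQ hν0) hA1,
          mul_pos (mul_pos hQ hν0) hB1]
      · positivity
  · rw [Asymptotics.isBigO_iff]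
    refine ⟨2 * ν, ?_⟩
    filter_upwards [eventually_ge_atTop (2:ℝ)] with k hk
    have hk0 : (0:ℝ) < k := by linarith
    have hk1 : (0:ℝ) < k - 1 := by linarith
    obtain ⟨c, hc, hslope⟩ := exists_hasDerivAt_eq_slope (fun x : ℝ => x ^ ν)
      (fun x : ℝ => ν * x ^ (ν - 1)) (show k - 1 < k + 1 by linarith)
      (fun x hx => by
        exact (Real.hasDerivAt_rpow_const (p := ν)
          (Or.inl (by rcases hx with ⟨h1, _⟩; intro h; rw [h] at h1; linarith))).continuousAt.continuousWithinAt)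
      (fun x hx => Real.hasDerivAt_rpow_const
        (Or.inl (by rcases hx with ⟨h1, _⟩; intro h; rw [h] at h1; linarith)))
    have hc1 : k - 1 < c := hc.1
    have hc2 : c < k + 1 := hc.2
    have hc0 : 0 < c := by linarith
    have hnum : (k + 1) ^ ν - (k - 1) ^ ν = 2 * (ν * c ^ (ν - 1)) := by
      have : (k + 1) - (k - 1) = 2 := by ring
      rw [this] at hslope
      field_simp at hslope ⊢
      linarith
    -- bound c ^ (ν - 1) ≤ 2 * k ^ (ν - 1)
    have hbound : c ^ (ν - 1) ≤ 2 * k ^ (ν - 1) := by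
      rcases le_or_gt 1 ν with h1ν | h1ν
      · have h1 : c ^ (ν - 1) ≤ (2 * k) ^ (ν - 1) :=
          rpow_le_rpow hc0.le (by linarith) (by linarith)
        have h2 : (2 * k) ^ (ν - 1) = 2 ^ (ν - 1) * k ^ (ν - 1) :=
          Real.mul_rpow (by norm_num) hk0.le
        have h3 : (2:ℝ) ^ (ν - 1) ≤ 2 ^ (1:ℝ) :=
          Real.rpow_le_rpow_left_iff (by norm_num) |>.mpr (by linarith)
        rw [Real.rpow_one] at h3
        calc c ^ (ν - 1) ≤ 2 ^ (ν - 1) * k ^ (ν - 1) := by rw [← h2]; exact h1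
          _ ≤ 2 * k ^ (ν - 1) := by
              apply mul_le_mul_of_nonneg_right h3 (rpow_nonneg hk0.le _)
      · have hhalf : (0:ℝ) < k / 2 := by linarith
        have h1 : c ^ (ν - 1) ≤ (k / 2) ^ (ν - 1) :=
          Real.rpow_le_rpow_of_nonpos hhalf (by linarith) (by linarith)
        have h2 : (k / 2) ^ (ν - 1) = k ^ (ν - 1) / 2 ^ (ν - 1) :=
          Real.div_rpow hk0.le (by norm_num : (0:ℝ) ≤ 2) (ν - 1)
        have h3 : (2:ℝ) ^ (-1:ℝ) ≤ 2 ^ (ν - 1) :=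
          Real.rpow_le_rpow_left_iff (by norm_num) |>.mpr (by linarith)
        have h4 : k ^ (ν - 1) / 2 ^ (ν - 1) ≤ k ^ (ν - 1) / 2 ^ (-1:ℝ) := by
          apply div_le_div_of_nonneg_left (rpow_nonneg hk0.le _) (by positivity) h3
        have h5 : (2:ℝ) ^ (-1:ℝ) = 1 / 2 := by
          rw [Real.rpow_neg_one]; norm_num
        rw [h5] at h4
        calc c ^ (ν - 1) ≤ k ^ (ν - 1) / 2 ^ (ν - 1) := by rw [← h2]; exact h1
          _ ≤ k ^ (ν - 1) / (1 / 2) := h4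
          _ = 2 * k ^ (ν - 1) := by ring
    have hfk : ((k + 1) ^ ν - (k - 1) ^ ν) / (2 * k ^ μ) = ν * c ^ (ν - 1) / k ^ μ := by
      rw [hnum]
      have : (0:ℝ) < k ^ μ := rpow_pos_of_pos hk0 _
      field_simp
    have hpos : (0:ℝ) ≤ ((k + 1) ^ ν - (k - 1) ^ ν) / (2 * k ^ μ) := by
      apply div_nonneg
      · have : (k - 1) ^ ν ≤ (k + 1) ^ ν := rpow_le_rpow (by linarith) (by linarith) hν0.le
        linarith
      · positivity
    have hgpos : (0:ℝ) < k ^ (-1 - α) := rpow_pos_of_pos hk0 _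
    rw [Real.norm_eq_abs, Real.norm_eq_abs, abs_of_nonneg hpos, abs_of_nonneg hgpos.le]
    rw [hfk]
    have hr : k ^ (ν - 1) / k ^ μ = k ^ (-1 - α) := by
      rw [← Real.rpow_sub hk0]
      congr 1
      rw [hμ]; ring
    calc ν * c ^ (ν - 1) / k ^ μ
        ≤ ν * (2 * k ^ (ν - 1)) / k ^ μ := by
          gcongr
      _ = 2 * ν * (k ^ (ν - 1) / k ^ μ) := by ring
      _ = 2 * ν * k ^ (-1 - α) := by rw [hr]
end

section
/- The inequality |a_{12}| − |a_{13}| = (2^ν + κ_μ − 1)/2 − (3^ν − 1)/2^{μ+1} ≥ (4^{ν + α/2} − 3^ν + 1)/2^{ν + α + 1} > 0 holds, where a_{12}, a_{13} are entries of the (rescaled) discretized fractional Laplacian matrix. -/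
theorem stmt5 (α μ ν κμ : ℝ) (hα : 0 < α) (hα2 : α < 2) (hμl : α < μ) (hμu : μ ≤ 2)
    (hν : ν = μ - α) (hκ : κμ = if μ < 2 then 1 else 2) :
    ((2 : ℝ) ^ ν + κμ - 1) / 2 - ((3 : ℝ) ^ ν - 1) / 2 ^ (μ + 1)
      ≥ ((4 : ℝ) ^ (ν + α / 2) - 3 ^ ν + 1) / 2 ^ (ν + α + 1) ∧
    0 < ((4 : ℝ) ^ (ν + α / 2) - 3 ^ ν + 1) / 2 ^ (ν + α + 1) := by
  have h2 : (0:ℝ) < 2 := two_pos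
  have hν0 : 0 < ν := by rw [hν]; linarith
  have hA : (0:ℝ) < 2 ^ ν := Real.rpow_pos_of_pos h2 ν
  have hq : (0:ℝ) < 2 ^ α := Real.rpow_pos_of_pos h2 α
  have hq1 : (1:ℝ) ≤ 2 ^ α := by
    calc (1:ℝ) = 2 ^ (0:ℝ) := (Real.rpow_zero 2).symm
    _ ≤ 2 ^ α := Real.rpow_le_rpow_left_iff (by norm_num) |>.mpr hα.le
  have hB : (3:ℝ) ^ ν < 2 ^ ν * 2 ^ ν := by
    have h4 : (3:ℝ) ^ ν < 4 ^ ν :=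
      Real.rpow_lt_rpow (by norm_num) (by norm_num) hν0
    have e : (4:ℝ) ^ ν = 2 ^ ν * 2 ^ ν := by
      rw [show (4:ℝ) = 2 * 2 by norm_num, Real.mul_rpow h2.le h2.le]
    linarith [e ▸ h4]
  have hs : (2:ℝ) ^ (α/2) * 2 ^ (α/2) = 2 ^ α := by
    rw [← Real.rpow_add h2]; ring_nf
  have h4 : (4:ℝ) ^ (ν + α / 2) = 2 ^ ν * 2 ^ ν * 2 ^ α := by
    rw [show (4:ℝ) = 2 * 2 by norm_num, Real.mul_rpow h2.le h2.le,
      Real.rpow_add h2]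
    nlinarith [hs, Real.rpow_pos_of_pos h2 (α/2)]
  have hden : (2:ℝ) ^ (ν + α + 1) = 2 ^ ν * 2 ^ α * 2 := by
    rw [Real.rpow_add h2, Real.rpow_add h2, Real.rpow_one]
  have hden2 : (2:ℝ) ^ (μ + 1) = 2 ^ ν * 2 ^ α * 2 := by
    rw [show μ + 1 = ν + α + 1 by rw [hν]; ring, hden]
  have hκ1 : (1:ℝ) ≤ κμ := by rw [hκ]; split <;> norm_num
  have hB3 : ν = μ - α := hν
  rw [h4, hden, hden2]
  have hne : (2:ℝ) ^ ν * 2 ^ α * 2 ≠ 0 := by positivity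
  constructor
  · have key : ((2 : ℝ) ^ ν + κμ - 1) / 2 - ((3 : ℝ) ^ ν - 1) / (2 ^ ν * 2 ^ α * 2)
        - (2 ^ ν * 2 ^ ν * 2 ^ α - 3 ^ ν + 1) / (2 ^ ν * 2 ^ α * 2) = (κμ - 1) / 2 := by
      field_simp
      ring
    linarith
  · apply div_pos
    · nlinarith
    · positivity
end

section
/- Let b > 0, K a nonnegative diagonal matrix, and A a symmetric matrix with positive diagonal entries and D(A) ≥ 0. Then the matrix M = bI + KA is invertible, and for every y ∈ ℝⁿ, ‖My‖_∞ ≥ b‖y‖_∞; consequently ‖M^{-1}‖_∞ ≤ 1/b. -/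
/-- Diagonal dominance functional `D(C) = min_i (|C_ii| - Σ_{j≠i} |C_ij|)`. -/
noncomputable def DD {n : ℕ} (C : Matrix (Fin n) (Fin n) ℝ) : ℝ :=
  ⨅ i : Fin n, (|C i i| - ∑ j ∈ Finset.univ.filter (fun j => j ≠ i), |C i j|)

theorem stmt10 {n : ℕ} (hn : 0 < n) (b : ℝ) (hb : 0 < b)
    (κ : Fin n → ℝ) (hκ : ∀ i, 0 ≤ κ i)
    (A : Matrix (Fin n) (Fin n) ℝ) (hAs : A.IsSymm)
    (hA : ∀ i, 0 < A i i) (hDA : 0 ≤ DD A) :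
    let M := b • (1 : Matrix (Fin n) (Fin n) ℝ) + Matrix.diagonal κ * A
    IsUnit M ∧
    (∀ y : Fin n → ℝ, b * ‖y‖ ≤ ‖M.mulVec y‖) ∧
    (∀ y : Fin n → ℝ, ‖(M⁻¹).mulVec y‖ ≤ (1 / b) * ‖y‖) := by
  intro M
  haveI : NeZero n := ⟨hn.ne'⟩
  have hMentry : ∀ i j, M i j = b * (if i = j then 1 else 0) + κ i * A i j := by
    intro i j
    simp [M, Matrix.add_apply, Matrix.smul_apply, Matrix.one_apply, Matrix.diagonal_mul,
      mul_ite, mul_one, mul_zero]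
  -- row-wise dominance for A
  have hArow : ∀ i : Fin n,
      0 ≤ A i i - ∑ j ∈ Finset.univ.filter (fun j => j ≠ i), |A i j| := by
    intro i
    have hbdd : BddBelow (Set.range fun i : Fin n =>
        |A i i| - ∑ j ∈ Finset.univ.filter (fun j => j ≠ i), |A i j|) :=
      (Set.finite_range _).bddBelow
    have h := ciInf_le hbdd i
    have h2 : (0:ℝ) ≤ |A i i| - ∑ j ∈ Finset.univ.filter (fun j => j ≠ i), |A i j| :=
      le_trans hDA h
    rwa [abs_of_pos (hA i)] at h2
  -- key: b ≤ M i i - Σ_{j≠i} |M i j|, and M i i > 0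
  have hMrow : ∀ i : Fin n,
      b ≤ |M i i| - ∑ j ∈ Finset.univ.filter (fun j => j ≠ i), |M i j| := by
    intro i
    have hMii : M i i = b + κ i * A i i := by rw [hMentry]; simp
    have hMij : ∀ j, j ≠ i → |M i j| = κ i * |A i j| := by
      intro j hj
      rw [hMentry]
      rw [if_neg (fun h => hj h.symm)]
      rw [mul_zero, zero_add, abs_mul, abs_of_nonneg (hκ i)]
    have hpos : 0 < M i i := by
      rw [hMii]
      have := mul_nonneg (hκ i) (hA i).le
      linarith
    rw [abs_of_pos hpos, hMii]
    have hsum : ∑ j ∈ Finset.univ.filter (fun j => j ≠ i), |M i j|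
        = κ i * ∑ j ∈ Finset.univ.filter (fun j => j ≠ i), |A i j| := by
      rw [Finset.mul_sum]
      apply Finset.sum_congr rfl
      intro j hj
      exact hMij j (Finset.mem_filter.mp hj).2
    rw [hsum]
    have := mul_le_mul_of_nonneg_left (sub_nonneg.mp (hArow i)) (hκ i)
    nlinarith
  -- main estimate
  have hmain : ∀ y : Fin n → ℝ, b * ‖y‖ ≤ ‖M.mulVec y‖ := by
    intro y
    obtain ⟨i, hi⟩ := Finite.exists_max (fun i => |y i|)
    have hynorm : ‖y‖ = |y i| := by
      apply le_antisymm
      · exact pi_norm_le_iff_of_nonneg (abs_nonneg _) |>.mpr fun j => hi j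
      · exact norm_le_pi_norm y i
    have hcomp : |(M.mulVec y) i| ≤ ‖M.mulVec y‖ := by
      simpa [Real.norm_eq_abs] using norm_le_pi_norm (M.mulVec y) i
    refine le_trans ?_ hcomp
    have hsplit : (M.mulVec y) i = M i i * y i +
        ∑ j ∈ Finset.univ.filter (fun j => j ≠ i), M i j * y j := by
      rw [Matrix.mulVec, dotProduct]
      rw [← Finset.add_sum_erase _ _ (Finset.mem_univ i)]
      congr 1
      apply Finset.sum_congr
      · ext j; simp [Finset.mem_erase, and_comm]
      · intros; rfl
    have h1 : |M i i * y i| - |∑ j ∈ Finset.univ.filter (fun j => j ≠ i), M i j * y j|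
        ≤ |(M.mulVec y) i| := by
      rw [hsplit]
      simpa [sub_neg_eq_add] using abs_sub_abs_le_abs_sub (M i i * y i)
        (-(∑ j ∈ Finset.univ.filter (fun j => j ≠ i), M i j * y j))
    have h2 : |∑ j ∈ Finset.univ.filter (fun j => j ≠ i), M i j * y j|
        ≤ (∑ j ∈ Finset.univ.filter (fun j => j ≠ i), |M i j|) * ‖y‖ := by
      calc |∑ j ∈ Finset.univ.filter (fun j => j ≠ i), M i j * y j|
          ≤ ∑ j ∈ Finset.univ.filter (fun j => j ≠ i), |M i j * y j| :=
            Finset.abs_sum_le_sum_abs _ _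
        _ ≤ ∑ j ∈ Finset.univ.filter (fun j => j ≠ i), |M i j| * ‖y‖ := by
            apply Finset.sum_le_sum
            intro j _
            rw [abs_mul]
            exact mul_le_mul_of_nonneg_left (norm_le_pi_norm y j) (abs_nonneg _)
        _ = _ := by rw [← Finset.sum_mul]
    have h3 : |M i i * y i| = |M i i| * ‖y‖ := by rw [abs_mul, hynorm]
    have h4 := hMrow i
    calc b * ‖y‖ ≤ (|M i i| - ∑ j ∈ Finset.univ.filter (fun j => j ≠ i), |M i j|) * ‖y‖ :=
          mul_le_mul_of_nonneg_right h4 (norm_nonneg y)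
      _ ≤ |M i i * y i| - |∑ j ∈ Finset.univ.filter (fun j => j ≠ i), M i j * y j| := by
          rw [h3, sub_mul]; linarith
      _ ≤ |(M.mulVec y) i| := h1
  -- invertibility
  have hunit : IsUnit M := by
    rw [Matrix.isUnit_iff_isUnit_det, isUnit_iff_ne_zero]
    intro hdet
    obtain ⟨v, hv, hMv⟩ := (Matrix.exists_mulVec_eq_zero_iff).mpr hdet
    have h := hmain v
    rw [hMv, norm_zero] at h
    have hv0 : ‖v‖ = 0 := by nlinarith [norm_nonneg v]
    exact hv (norm_eq_zero.mp hv0)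
  refine ⟨hunit, hmain, ?_⟩
  intro y
  have key : M.mulVec ((M⁻¹).mulVec y) = y := by
    rw [Matrix.mulVec_mulVec, Matrix.mul_nonsing_inv _ ((Matrix.isUnit_iff_isUnit_det M).mp hunit), Matrix.one_mulVec]
  have := hmain ((M⁻¹).mulVec y)
  rw [key] at this
  rw [div_mul_eq_mul_div, le_div_iff₀ hb, mul_comm]
  linarith
end

section
/- All eigenvalues of the Strang circulant approximation s(A) of the discretized fractional Laplacian matrix A lie inside the disc {z ∈ ℝ : |z − a_{11}| < a_{11}}, and hence are strictly positive for all N. -/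
theorem stmt11 (α μ ν κμ C : ℝ) (N : ℕ)
    (hα : 0 < α) (hα2 : α < 2) (hμl : α < μ) (hμu : μ ≤ 2)
    (hν : ν = μ - α) (hκ : κμ = if μ < 2 then 1 else 2)
    (hC : 0 < C) (hN : 2 ≤ N) :
    -- Strang circulant approximation of A: first column
    -- [a₁₁, a₁₂, …, a_{1,⌊(N+1)/2⌋}, a_{1,⌊N/2⌋}, …, a₁₂]ᵀ
    let v : Fin (N - 1) → ℝ :=
      fun k => flEntry α μ ν κμ C N (min k.val ((N - 1) - k.val))
    let S := Matrix.circulant v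
    ∀ z : ℝ, Module.End.HasEigenvalue (Matrix.toLin' S) z →
      |z - flEntry α μ ν κμ C N 0| < flEntry α μ ν κμ C N 0 ∧ 0 < z := by
  intro v S z hz
  have hn : 1 ≤ N - 1 := by omega
  haveI : NeZero (N - 1) := ⟨by omega⟩
  set a := flEntry α μ ν κμ C N with ha_def
  have hν0 : 0 < ν := by rw [hν]; linarith
  have hκ1 : (1:ℝ) ≤ κμ := by rw [hκ]; split <;> norm_num
  have hE : 0 < (2:ℝ) ^ ν + κμ - 1 := by
    have h2 : (1:ℝ) < (2:ℝ) ^ ν := Real.one_lt_rpow_iff_of_pos (by norm_num) |>.mpr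
      (Or.inl ⟨by norm_num, hν0⟩)
    linarith
  -- nonnegativity of the generic numerators
  have hg : ∀ k : ℕ, 1 ≤ k → (0:ℝ) ≤ ((k:ℝ) + 1) ^ ν - ((k:ℝ) - 1) ^ ν := by
    intro k hk
    have hk1 : (1:ℝ) ≤ (k:ℝ) := by exact_mod_cast hk
    have := Real.rpow_le_rpow (by linarith : (0:ℝ) ≤ (k:ℝ) - 1)
      (by linarith : (k:ℝ) - 1 ≤ (k:ℝ) + 1) hν0.le
    linarith
  have hpow : ∀ k : ℕ, 1 ≤ k → (0:ℝ) < (k:ℝ) ^ μ := by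
    intro k hk
    exact Real.rpow_pos_of_pos (by exact_mod_cast hk) μ
  -- absolute values of off-diagonal entries
  have habs1 : |a 1| = C * ((2:ℝ) ^ ν + κμ - 1) / 2 := by
    have h1 : a 1 = -(C * ((2:ℝ) ^ ν + κμ - 1) / 2) := by simp [ha_def, flEntry]
    rw [h1, abs_neg, abs_of_nonneg]
    positivity
  have habs2 : ∀ k : ℕ, 2 ≤ k →
      |a k| = C * (((k:ℝ) + 1) ^ ν - ((k:ℝ) - 1) ^ ν) / (2 * (k:ℝ) ^ μ) := by
    intro k hk
    have h1 : a k = -(C * (((k:ℝ) + 1) ^ ν - ((k:ℝ) - 1) ^ ν) / (2 * (k:ℝ) ^ μ)) := by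
      simp only [ha_def, flEntry]
      rw [if_neg (by omega), if_neg (by omega)]
    rw [h1, abs_neg, abs_of_nonneg]
    have := hg k (by omega)
    have := hpow k (by omega)
    positivity
  -- the key inequality: twice the sum of off-diagonal magnitudes is below a 0
  have hB : (0:ℝ) < ((N:ℝ) ^ ν - ((N:ℝ) - 1) ^ ν) / (N:ℝ) ^ μ := by
    have hN1 : (2:ℝ) ≤ (N:ℝ) := by exact_mod_cast hN
    have hnum : ((N:ℝ) - 1) ^ ν < (N:ℝ) ^ ν :=
      Real.rpow_lt_rpow (by linarith) (by linarith) hν0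
    exact div_pos (by linarith) (Real.rpow_pos_of_pos (by linarith) μ)
  have hP : (0:ℝ) < 2 * ν / (α * (N:ℝ) ^ α) := by
    have hN1 : (2:ℝ) ≤ (N:ℝ) := by exact_mod_cast hN
    exact div_pos (by linarith) (mul_pos hα (Real.rpow_pos_of_pos (by linarith) α))
  have hsum_lt : 2 * ∑ k ∈ Finset.Icc 1 (N - 1), |a k| < a 0 := by
    have hins : Finset.Icc 1 (N - 1) = insert 1 (Finset.Icc 2 (N - 1)) := by
      ext x; simp [Finset.mem_Icc]; omega
    rw [hins, Finset.sum_insert (by simp)]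
    have hsum2 : ∑ k ∈ Finset.Icc 2 (N - 1), |a k|
        = (C / 2) * ∑ k ∈ Finset.Icc 2 (N - 1),
            (((k:ℝ) + 1) ^ ν - ((k:ℝ) - 1) ^ ν) / (k:ℝ) ^ μ := by
      rw [Finset.mul_sum]
      refine Finset.sum_congr rfl fun k hk => ?_
      have hk2 : 2 ≤ k := (Finset.mem_Icc.mp hk).1
      rw [habs2 k hk2]
      have := (hpow k (by omega)).ne'
      field_simp
    rw [habs1, hsum2]
    have ha0 : a 0 = C * ((∑ ℓ ∈ Finset.Icc 2 (N - 1),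
        (((ℓ : ℝ) + 1) ^ ν - ((ℓ : ℝ) - 1) ^ ν) / (ℓ : ℝ) ^ μ)
      + ((N : ℝ) ^ ν - ((N : ℝ) - 1) ^ ν) / (N : ℝ) ^ μ
      + ((2 : ℝ) ^ ν + κμ - 1) + 2 * ν / (α * (N : ℝ) ^ α)) := by
      simp [ha_def, flEntry]
    rw [ha0]
    nlinarith [mul_pos hC hB, mul_pos hC hP]
  -- Gershgorin
  obtain ⟨i, hi⟩ := eigenvalue_mem_ball hz
  rw [Metric.mem_closedBall, Real.dist_eq] at hi
  have hSii : S i i = a 0 := by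
    simp [S, Matrix.circulant_apply, v, sub_self, ha_def]
  -- reindex the Gershgorin radius
  have hre : ∑ j ∈ Finset.univ.erase i, ‖S i j‖
      = ∑ d ∈ Finset.univ.erase (0 : Fin (N - 1)), |v d| := by
    refine Finset.sum_nbij' (fun j => i - j) (fun d => i - d) ?_ ?_ ?_ ?_ ?_
    · intro j hj
      simp only [Finset.mem_erase, Finset.mem_univ, and_true] at hj ⊢
      rw [Ne, sub_eq_zero]
      exact fun h => hj h.symm
    · intro d hd
      simp only [Finset.mem_erase, Finset.mem_univ, and_true] at hd ⊢
      intro h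
      apply hd
      have h2 := sub_sub_cancel i d
      rw [h, sub_self] at h2
      exact h2.symm
    · intro j _; simp [sub_sub_cancel]
    · intro d _; simp [sub_sub_cancel]
    · intro j _
      simp [S, Matrix.circulant_apply, Real.norm_eq_abs]
  -- bound the reindexed sum fiberwise
  have hfib : ∑ d ∈ Finset.univ.erase (0 : Fin (N - 1)), |v d|
      ≤ 2 * ∑ k ∈ Finset.Icc 1 (N - 1 - 1), |a k| := by
    have hmap : ∀ d ∈ Finset.univ.erase (0 : Fin (N - 1)),
        min d.val ((N - 1) - d.val) ∈ Finset.Icc 1 (N - 1 - 1) := by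
      intro d hd
      simp only [Finset.mem_erase, Finset.mem_univ, and_true] at hd
      have hd0 : d.val ≠ 0 := fun h => hd (Fin.ext h)
      have := d.isLt
      simp only [Finset.mem_Icc]
      omega
    rw [← Finset.sum_fiberwise_of_maps_to hmap (fun d => |v d|), Finset.mul_sum]
    refine Finset.sum_le_sum fun y hy => ?_
    have hy' := Finset.mem_Icc.mp hy
    have hylt : y < N - 1 := by omega
    have hylt2 : (N - 1) - y < N - 1 := by omega
    have hval : ∀ d ∈ (Finset.univ.erase (0 : Fin (N - 1))).filter
        (fun d => min d.val ((N - 1) - d.val) = y), |v d| = |a y| := by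
      intro d hd
      have := (Finset.mem_filter.mp hd).2
      simp only [v, this, ha_def]
    rw [Finset.sum_congr rfl hval, Finset.sum_const, nsmul_eq_mul]
    have hcard : ((Finset.univ.erase (0 : Fin (N - 1))).filter
        (fun d => min d.val ((N - 1) - d.val) = y)).card ≤ 2 := by
      have hsub : (Finset.univ.erase (0 : Fin (N - 1))).filter
          (fun d => min d.val ((N - 1) - d.val) = y)
          ⊆ {(⟨y, hylt⟩ : Fin (N - 1)), ⟨(N - 1) - y, hylt2⟩} := by
        intro d hd
        have h1 := (Finset.mem_filter.mp hd).2
        have := d.isLt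
        simp only [Finset.mem_insert, Finset.mem_singleton, Fin.ext_iff]
        omega
      calc _ ≤ ({(⟨y, hylt⟩ : Fin (N - 1)), ⟨(N - 1) - y, hylt2⟩} : Finset _).card :=
            Finset.card_le_card hsub
        _ ≤ 2 := (Finset.card_insert_le _ _).trans (by simp)
    calc (((Finset.univ.erase (0 : Fin (N - 1))).filter
          (fun d => min d.val ((N - 1) - d.val) = y)).card : ℝ) * |a y|
        ≤ 2 * |a y| := by
          apply mul_le_mul_of_nonneg_right _ (abs_nonneg _)
          exact_mod_cast hcard
      _ = 2 * |a y| := rfl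
  have hmono : ∑ k ∈ Finset.Icc 1 (N - 1 - 1), |a k| ≤ ∑ k ∈ Finset.Icc 1 (N - 1), |a k| :=
    Finset.sum_le_sum_of_subset_of_nonneg
      (Finset.Icc_subset_Icc_right (by omega)) (fun k _ _ => abs_nonneg _)
  have hfinal : |z - a 0| < a 0 := by
    rw [hSii] at hi
    calc |z - a 0| ≤ ∑ j ∈ Finset.univ.erase i, ‖S i j‖ := hi
      _ = ∑ d ∈ Finset.univ.erase (0 : Fin (N - 1)), |v d| := hre
      _ ≤ 2 * ∑ k ∈ Finset.Icc 1 (N - 1 - 1), |a k| := hfib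
      _ ≤ 2 * ∑ k ∈ Finset.Icc 1 (N - 1), |a k| := by linarith
      _ < a 0 := hsum_lt
  refine ⟨hfinal, ?_⟩
  rcases abs_lt.mp hfinal with ⟨h1, _⟩
  linarith
end

section
/- Let B₁, …, B_M be invertible n×n real matrices with ‖B_m^{-1}‖_∞ ≤ Γ(1−γ)/b_1^{(m,γ)}, let the graded-L1 weights satisfy 0 < b_1^{(m,γ)} ≤ b_2^{(m,γ)} ≤ ⋯ ≤ b_m^{(m,γ)}, and suppose the vectors u⁰, u¹, …, u^M satisfy b_m^{(m,γ)}‖u^m‖_∞ ≤ Σ_{k=1}^{m−1}(b_{k+1}^{(m,γ)} − b_k^{(m,γ)})‖u^k‖_∞ + b_1^{(m,γ)}[‖u⁰‖_∞ + (Γ(1−γ)/b_1^{(m,γ)})‖f^m‖_∞] for each m. Then for all k = 1, …, M: ‖u^k‖_∞ ≤ ‖u⁰‖_∞ + Γ(1−γ) max_{1≤s≤k} ‖f^s‖_∞ / b_1^{(s,γ)}. -/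
theorem stmt15 {n : ℕ} (M : ℕ) (hM : 1 ≤ M) (γ : ℝ) (hγ0 : 0 < γ) (hγ1 : γ < 1)
    (b : ℕ → ℕ → ℝ)  -- b m k = b_k^{(m,γ)}
    (hb1 : ∀ m, 1 ≤ m → m ≤ M → 0 < b m 1)
    (hbmono : ∀ m, 1 ≤ m → m ≤ M → ∀ k, 1 ≤ k → k < m → b m k ≤ b m (k + 1))
    (B : ℕ → Matrix (Fin n) (Fin n) ℝ)
    (hB : ∀ m, 1 ≤ m → m ≤ M → IsUnit (B m) ∧
      ∀ y : Fin n → ℝ, ‖((B m)⁻¹).mulVec y‖ ≤ (Real.Gamma (1 - γ) / b m 1) * ‖y‖)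
    (u f : ℕ → (Fin n → ℝ))
    (hrec : ∀ m, 1 ≤ m → m ≤ M →
      b m m * ‖u m‖ ≤ (∑ k ∈ Finset.Icc 1 (m - 1), (b m (k + 1) - b m k) * ‖u k‖)
        + b m 1 * (‖u 0‖ + (Real.Gamma (1 - γ) / b m 1) * ‖f m‖)) :
    ∀ k, (hk1 : 1 ≤ k) → k ≤ M →
      ‖u k‖ ≤ ‖u 0‖ + Real.Gamma (1 - γ) *
        ((Finset.Icc 1 k).sup' (Finset.nonempty_Icc.mpr hk1)
          (fun s => ‖f s‖ / b s 1)) := by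
  have hΓ : 0 < Real.Gamma (1 - γ) := Real.Gamma_pos_of_pos (by linarith)
  intro k
  induction k using Nat.strong_induction_on with
  | _ k IH =>
  intro hk1 hkM
  set S : ℝ := (Finset.Icc 1 k).sup' (Finset.nonempty_Icc.mpr hk1)
      (fun s => ‖f s‖ / b s 1) with hS
  set E : ℝ := ‖u 0‖ + Real.Gamma (1 - γ) * S with hE
  -- b k j ≥ b k 1 for 1 ≤ j ≤ k
  have hbge : ∀ j, 1 ≤ j → j ≤ k → b k 1 ≤ b k j := by
    intro j hj1 hjk
    induction j with
    | zero => omega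
    | succ i ih =>
      rcases Nat.eq_or_lt_of_le hj1 with h | h
      · simp [← h]
      · have hi1 : 1 ≤ i := by omega
        have hik : i ≤ k := by omega
        exact le_trans (ih hi1 hik) (hbmono k hk1 hkM i hi1 (by omega))
  have hbkk : 0 < b k k := lt_of_lt_of_le (hb1 k hk1 hkM) (hbge k hk1 le_rfl)
  -- each previous term bounded by E
  have hsum : (∑ j ∈ Finset.Icc 1 (k - 1), (b k (j + 1) - b k j) * ‖u j‖)
      ≤ ∑ j ∈ Finset.Icc 1 (k - 1), (b k (j + 1) - b k j) * E := by
    apply Finset.sum_le_sum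
    intro j hj
    simp only [Finset.mem_Icc] at hj
    have hj1 : 1 ≤ j := hj.1
    have hjk : j < k := by omega
    have hw : 0 ≤ b k (j + 1) - b k j :=
      sub_nonneg.mpr (hbmono k hk1 hkM j hj1 hjk)
    have hUj : ‖u j‖ ≤ E := by
      have h1 := IH j hjk hj1 (le_trans (le_of_lt hjk) hkM)
      have hsup : ((Finset.Icc 1 j).sup' (Finset.nonempty_Icc.mpr hj1)
          (fun s => ‖f s‖ / b s 1)) ≤ S := by
        apply Finset.sup'_le
        intro s hs
        simp only [Finset.mem_Icc] at hs
        exact Finset.le_sup' (f := fun s => ‖f s‖ / b s 1)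
          (Finset.mem_Icc.mpr ⟨hs.1, le_trans hs.2 (le_of_lt hjk)⟩)
      have := mul_le_mul_of_nonneg_left hsup (le_of_lt hΓ)
      rw [hE]; linarith
    exact mul_le_mul_of_nonneg_left hUj hw
  -- telescoping sum
  have htel : (∑ j ∈ Finset.Icc 1 (k - 1), (b k (j + 1) - b k j)) = b k k - b k 1 := by
    have key : ∀ m : ℕ, (∑ j ∈ Finset.Icc 1 m, (b k (j + 1) - b k j)) = b k (m + 1) - b k 1 := by
      intro m
      induction m with
      | zero => simp
      | succ i ih =>
        rw [Finset.sum_Icc_succ_top (by omega), ih]; ring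
    have hk' : k - 1 + 1 = k := by omega
    rw [key (k - 1), hk']
  -- the f-term
  have hfterm : b k 1 * (‖u 0‖ + (Real.Gamma (1 - γ) / b k 1) * ‖f k‖) ≤ b k 1 * E := by
    have hb1k := hb1 k hk1 hkM
    have hfk : ‖f k‖ / b k 1 ≤ S :=
      Finset.le_sup' (f := fun s => ‖f s‖ / b s 1)
        (Finset.mem_Icc.mpr ⟨hk1, le_rfl⟩)
    apply mul_le_mul_of_nonneg_left _ (le_of_lt hb1k)
    have : (Real.Gamma (1 - γ) / b k 1) * ‖f k‖ = Real.Gamma (1 - γ) * (‖f k‖ / b k 1) := by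
      ring
    rw [hE, this]
    have := mul_le_mul_of_nonneg_left hfk (le_of_lt hΓ)
    linarith
  have hmain : b k k * ‖u k‖ ≤ b k k * E := by
    have h1 := hrec k hk1 hkM
    have h2 : (∑ j ∈ Finset.Icc 1 (k - 1), (b k (j + 1) - b k j) * E)
        = (b k k - b k 1) * E := by
      rw [← Finset.sum_mul, htel]
    calc b k k * ‖u k‖ ≤ _ := h1
      _ ≤ (∑ j ∈ Finset.Icc 1 (k - 1), (b k (j + 1) - b k j) * E) + b k 1 * E := by
          exact add_le_add hsum hfterm
      _ = b k k * E := by rw [h2]; ring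
  exact le_of_mul_le_mul_left hmain hbkk
end
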